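/- The eigenprojection P_d(v) = |ψ(v)⟩⟨ψ(v)| of h(v) onto the eigenvalue λ(v) converges strongly (but not in norm) to 0 as v ↗ v_{c,1}: for every fixed canonical basis vector e, ‖P_d(v)e‖² ≤ C√(v_{c,1}-v) → 0, while ‖P_d(v)‖ = 1 for all v < v_{c,1}. -/

import Mathlib

noncomputable def zeta1 (x : ℝ) : ℝ := x / 2 * (1 - Real.sqrt (1 - 4 / x ^ 2))

noncomputable def Gf (E₀ τ x v : ℝ) : ℝ := E₀ - x + τ ^ 2 * (zeta1 (x - v) + zeta1 x)

open Filter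
open scoped InnerProductSpace

lemma zeta1_eq {x : ℝ} (hx : 2 ≤ x) : zeta1 x = (x - Real.sqrt (x^2 - 4))/2 := by
  have hx0 : (0:ℝ) < x := by linarith
  have h1 : 1 - 4/x^2 = (x^2-4)/x^2 := by field_simp
  have h2 : Real.sqrt ((x^2-4)/x^2) = Real.sqrt (x^2-4) / x := by
    rw [Real.sqrt_div (by nlinarith), Real.sqrt_sq hx0.le]
  unfold zeta1
  rw [h1, h2]
  field_simp

lemma zeta1_two : zeta1 2 = 1 := by
  unfold zeta1; norm_num

lemma zeta1_pos {x : ℝ} (hx : 2 < x) : 0 < zeta1 x := by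
  rw [zeta1_eq hx.le]
  have h : Real.sqrt (x^2-4) < Real.sqrt (x^2) :=
    Real.sqrt_lt_sqrt (by nlinarith) (by nlinarith)
  rw [Real.sqrt_sq (by linarith)] at h
  linarith

lemma zeta1_lt_one {x : ℝ} (hx : 2 < x) : zeta1 x < 1 := by
  rw [zeta1_eq hx.le]
  have h : x - 2 < Real.sqrt (x^2-4) := by
    rw [show x - 2 = Real.sqrt ((x-2)^2) by rw [Real.sqrt_sq (by linarith)]]
    apply Real.sqrt_lt_sqrt (by positivity)
    nlinarith
  linarith

lemma zeta1_mul {x : ℝ} (hx : 2 < x) : zeta1 x * (x - zeta1 x) = 1 := by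
  rw [zeta1_eq hx.le]
  have h : Real.sqrt (x^2-4) ^ 2 = x^2 - 4 := Real.sq_sqrt (by nlinarith)
  nlinarith [h]

lemma sqrt_diff_bound {x y : ℝ} (hx : 10 ≤ x) (hy : 10 ≤ y) (hxy : y ≤ x) :
    Real.sqrt (y^2-4) ≤ Real.sqrt (x^2-4) ∧
    Real.sqrt (x^2-4) - Real.sqrt (y^2-4) ≤ 2*(x-y) := by
  set A := Real.sqrt (x^2-4) with hA
  set B := Real.sqrt (y^2-4) with hB
  have hB2 : B ^ 2 = y^2 - 4 := Real.sq_sqrt (by nlinarith)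
  have hB0 : 0 ≤ B := Real.sqrt_nonneg _
  have hBy : B ≥ y/2 := by nlinarith
  constructor
  · exact Real.sqrt_le_sqrt (by nlinarith)
  · have h1 : x^2 - 4 ≤ (B + 2*(x-y))^2 := by nlinarith
    have h2 : (0:ℝ) ≤ B + 2*(x-y) := by linarith
    have h3 : A ≤ Real.sqrt ((B+2*(x-y))^2) := Real.sqrt_le_sqrt h1
    rw [Real.sqrt_sq h2] at h3
    linarith

lemma zeta1_lip {x y : ℝ} (hx : 10 ≤ x) (hy : 10 ≤ y) :
    |zeta1 x - zeta1 y| ≤ |x - y| / 2 := by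
  rcases le_total y x with h | h
  · obtain ⟨h1, h2⟩ := sqrt_diff_bound hx hy h
    rw [zeta1_eq (by linarith), zeta1_eq (by linarith),
      abs_of_nonneg (by linarith : (0:ℝ) ≤ x - y), abs_le]
    constructor <;> [linarith; linarith]
  · obtain ⟨h1, h2⟩ := sqrt_diff_bound hy hx h
    rw [zeta1_eq (by linarith), zeta1_eq (by linarith),
      abs_of_nonpos (by linarith : x - y ≤ 0), abs_le]
    constructor <;> [linarith; linarith]

lemma recur_sol {t : ℝ} (ht : 2 < t) (u : ℕ → ℂ) (hb : ∀ m, ‖u m‖ ≤ 1)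
    (hrec : ∀ m, u (m+2) + u m = (t:ℂ) * u (m+1)) :
    ∀ m, u (m+1) = (zeta1 t : ℂ) * u m := by
  set s := zeta1 t with hs
  have hs0 : 0 < s := zeta1_pos ht
  have hs1 : s < 1 := zeta1_lt_one ht
  have hmul : s * (t - s) = 1 := zeta1_mul ht
  have hp1 : 1 < t - s := by nlinarith
  set d : ℕ → ℂ := fun m => u (m+1) - (s:ℂ) * u m with hd
  have h2 : (s:ℂ) * ((t:ℂ) - (s:ℂ)) = 1 := by
    rw [show (t:ℂ) - (s:ℂ) = ((t - s : ℝ) : ℂ) by push_cast; ring,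
      ← Complex.ofReal_mul, hmul]; norm_num
  have hstep : ∀ m, d (m+1) = ((t:ℂ) - (s:ℂ)) * d m := by
    intro m
    simp only [hd]
    linear_combination hrec m + (u m) * h2
  have hpow : ∀ m, d m = ((t:ℂ) - (s:ℂ))^m * d 0 := by
    intro m
    induction m with
    | zero => simp
    | succ n ih => rw [hstep n, ih]; ring
  have hnorm : ∀ m, (t - s)^m * ‖d 0‖ ≤ 2 := by
    intro m
    have h3 : ‖d m‖ ≤ 2 := by
      simp only [hd]
      calc ‖u (m+1) - (s:ℂ) * u m‖ ≤ ‖u (m+1)‖ + ‖(s:ℂ) * u m‖ := norm_sub_le _ _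
      _ = ‖u (m+1)‖ + |s| * ‖u m‖ := by rw [norm_mul, Complex.norm_real, Real.norm_eq_abs]
      _ ≤ 1 + 1 * 1 := by
          have hb1 := hb (m+1); have hb2 := hb m
          have hs2 : |s| ≤ 1 := by rw [abs_of_pos hs0]; linarith
          gcongr
      _ = 2 := by norm_num
    have h4 : ‖d m‖ = (t-s)^m * ‖d 0‖ := by
      rw [hpow m, norm_mul, norm_pow,
        show (t:ℂ) - (s:ℂ) = ((t - s : ℝ) : ℂ) by push_cast; ring,
        Complex.norm_real, Real.norm_eq_abs, abs_of_pos (by linarith)]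
    linarith [h4 ▸ h3]
  have hd0 : d 0 = 0 := by
    by_contra hne
    have hpos : 0 < ‖d 0‖ := norm_pos_iff.mpr hne
    have htend : Tendsto (fun m => (t-s)^m * ‖d 0‖) atTop atTop :=
      (tendsto_pow_atTop_atTop_of_one_lt hp1).atTop_mul_const hpos
    obtain ⟨m, hm⟩ := (htend.eventually_gt_atTop 2).exists
    linarith [hnorm m]
  intro m
  have h5 := hpow m
  rw [hd0, mul_zero] at h5
  simp only [hd] at h5
  linear_combination h5

lemma geom_coef_bound {q c : ℝ} (hq0 : 0 ≤ q) (hq1 : q < 1)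
    (h : ∀ M : ℕ, c * ∑ m ∈ Finset.range M, q ^ m ≤ 1) : c ≤ 1 - q := by
  have h1 : Tendsto (fun M => c * ∑ m ∈ Finset.range M, q^m) atTop (nhds (c * (1-q)⁻¹)) :=
    ((hasSum_geometric_of_lt_one hq0 hq1).tendsto_sum_nat).const_mul c
  have h2 : c * (1-q)⁻¹ ≤ 1 := le_of_tendsto h1 (Filter.Eventually.of_forall h)
  have h3 : 0 < 1 - q := by linarith
  calc c = c * (1-q)⁻¹ * (1-q) := by field_simp
  _ ≤ 1 * (1-q) := mul_le_mul_of_nonneg_right h2 h3.le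
  _ = 1 - q := one_mul _

set_option maxHeartbeats 1000000


/-- The eigenprojection `P_d(v) = |ψ(v)⟩⟨ψ(v)|` of `h(v)` onto its eigenvalue
`λ(v) ∈ (v+2,∞)` converges strongly (but not in norm) to `0` as `v ↗ v_{c,1}`:
`‖P_d(v)e‖² ≤ C√(v_{c,1}-v)` for every fixed canonical basis vector `e`, while
`‖P_d(v)‖ = 1`. -/
theorem stmt16 (E₀ : ℝ) (hE : 10 ≤ E₀) :
    ∃ τ₀ > (0 : ℝ), ∀ τ : ℝ, τ ≠ 0 → |τ| ≤ τ₀ →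
    ∀ vc1 : ℝ, 4 < vc1 → Gf E₀ τ (2 + vc1) vc1 = 0 →
    ∀ (H : Type) [inst1 : NormedAddCommGroup H] [inst2 : InnerProductSpace ℂ H]
      [inst3 : CompleteSpace H],
    ∀ (S : H) (e : Bool → ℕ → H),
      Orthonormal ℂ (fun p : Option (Bool × ℕ) => p.elim S fun q => e q.1 q.2) →
      (Submodule.span ℂ
          (Set.range fun p : Option (Bool × ℕ) => p.elim S fun q => e q.1 q.2)).topologicalClosure
        = ⊤ →
    -- `A v = h(v)`, the coupled Hamiltonian with bias `v` on the `false` lead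
    ∀ A : ℝ → (H →L[ℂ] H),
      (∀ v : ℝ, IsSelfAdjoint (A v) ∧
        A v S = (E₀ : ℂ) • S + (τ : ℂ) • e false 0 + (τ : ℂ) • e true 0 ∧
        A v (e false 0) = e false 1 + (v : ℂ) • e false 0 + (τ : ℂ) • S ∧
        (∀ m : ℕ, A v (e false (m + 1))
            = e false (m + 2) + e false m + (v : ℂ) • e false (m + 1)) ∧
        A v (e true 0) = e true 1 + (τ : ℂ) • S ∧
        (∀ m : ℕ, A v (e true (m + 1)) = e true (m + 2) + e true m)) →
    ∀ (lam : ℝ → ℝ) (ψ : ℝ → H) (δ₀ : ℝ), 0 < δ₀ →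
      -- `ψ v` is a normalized eigenvector for the discrete eigenvalue `λ(v) ∈ (v+2,∞)`
      (∀ v ∈ Set.Ioo (vc1 - δ₀) vc1,
        ‖ψ v‖ = 1 ∧ v + 2 < lam v ∧ Gf E₀ τ (lam v) v = 0 ∧
          A v (ψ v) = ((lam v : ℝ) : ℂ) • ψ v) →
      ∃ δ ∈ Set.Ioc (0 : ℝ) δ₀, ∃ C > (0 : ℝ), ∀ v ∈ Set.Ioo (vc1 - δ) vc1,
        (∀ b : H, (b = S ∨ ∃ γ m, b = e γ m) →
          ‖((innerSL ℂ (ψ v)).smulRight (ψ v)) b‖ ^ 2 ≤ C * Real.sqrt (vc1 - v)) ∧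
        ‖(innerSL ℂ (ψ v)).smulRight (ψ v)‖ = 1 := by
  refine ⟨1/2, by norm_num, ?_⟩
  intro τ hτ0 hττ vc1 hvc1 hGfc H _ _ _ S e hON _hcl A hA lam ψ δ₀ hδ₀ hψ
  have hτ2 : τ^2 ≤ 1/4 := by nlinarith only [sq_abs τ, abs_nonneg τ, hττ]
  have hτpos : 0 < τ^2 := by positivity
  have hτ1 : |τ| ≤ 1 := by linarith only [hττ]
  -- bounds on vc1
  have hz1 : 0 < zeta1 (2+vc1) := zeta1_pos (by linarith only [hvc1])
  have hz2 : zeta1 (2+vc1) < 1 := zeta1_lt_one (by linarith only [hvc1])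
  have hGfc' : E₀ - 2 - vc1 + τ^2 * (1 + zeta1 (2+vc1)) = 0 := by
    unfold Gf at hGfc
    rw [show 2+vc1-vc1 = 2 by ring, zeta1_two] at hGfc
    linarith only [hGfc]
  have hzc1 : 0 < τ^2 * (1 + zeta1 (2+vc1)) :=
    mul_pos hτpos (by linarith only [hz1])
  have hzc2 : τ^2 * (1 + zeta1 (2+vc1)) ≤ (1/4) * 2 :=
    mul_le_mul hτ2 (by linarith only [hz2]) (by linarith only [hz1]) (by norm_num)
  have hvc1lo : E₀ - 2 < vc1 := by linarith only [hGfc', hzc1]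
  have hvc1hi : vc1 ≤ E₀ - 3/2 := by linarith only [hGfc', hzc2]
  refine ⟨min δ₀ 1, ⟨lt_min hδ₀ one_pos, min_le_left _ _⟩, 100/τ^4, by positivity, ?_⟩
  intro v hv
  have hv2 : v < vc1 := hv.2
  have hvmem : v ∈ Set.Ioo (vc1 - δ₀) vc1 :=
    ⟨by linarith only [hv.1, min_le_left δ₀ 1], hv2⟩
  obtain ⟨hψn, hgap, hGfv, heig⟩ := hψ v hvmem
  have hvlo : vc1 - 1 < v := by linarith only [hv.1, min_le_right δ₀ 1]
  have hv7 : 7 ≤ v := by linarith only [hvlo, hvc1lo, hE]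
  have hx2 : 2 < lam v - v := by linarith only [hgap]
  have hlam2 : 2 < lam v := by linarith only [hgap, hv7]
  have hzlv0 : 0 < zeta1 (lam v - v) := zeta1_pos hx2
  have hzlv1 : zeta1 (lam v - v) < 1 := zeta1_lt_one hx2
  have hzl0 : 0 < zeta1 (lam v) := zeta1_pos hlam2
  have hzl1 : zeta1 (lam v) < 1 := zeta1_lt_one hlam2
  have hGfv' : E₀ - lam v + τ^2 * (zeta1 (lam v - v) + zeta1 (lam v)) = 0 := by
    unfold Gf at hGfv; linarith only [hGfv]
  have hzv1 : 0 < τ^2 * (zeta1 (lam v - v) + zeta1 (lam v)) :=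
    mul_pos hτpos (by linarith only [hzlv0, hzl0])
  have hzv2 : τ^2 * (zeta1 (lam v - v) + zeta1 (lam v)) ≤ (1/4) * 2 :=
    mul_le_mul hτ2 (by linarith only [hzlv1, hzl1]) (by linarith only [hzlv0, hzl0])
      (by norm_num)
  have hlamlo : E₀ < lam v := by linarith only [hGfv', hzv1]
  have hlamhi : lam v ≤ E₀ + 1/2 := by linarith only [hGfv', hzv2]
  have hlam10 : 10 ≤ lam v := by linarith only [hlamlo, hE]
  -- the key estimate
  obtain ⟨g, hgdef⟩ : ∃ g : ℝ, g = 1 - zeta1 (lam v - v) := ⟨_, rfl⟩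
  have hg0 : 0 < g := by rw [hgdef]; linarith only [hzlv1]
  obtain ⟨D, hDdef⟩ : ∃ D : ℝ, D = lam v - (2+vc1) := ⟨_, rfl⟩
  obtain ⟨R, hRdef⟩ : ∃ R : ℝ, R = zeta1 (lam v) - zeta1 (2+vc1) := ⟨_, rfl⟩
  have hlip : |R| ≤ |D| / 2 := by
    rw [hRdef, hDdef]
    exact zeta1_lip hlam10 (by linarith only [hvc1lo, hE])
  have hDeq : D = τ^2 * R - τ^2 * g := by
    rw [hDdef, hRdef, hgdef]
    linear_combination hGfc' - hGfv'
  have h5 : |D| ≤ τ^2 * |R| + τ^2 * g := by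
    calc |D| = |τ^2 * R - τ^2 * g| := by rw [hDeq]
    _ ≤ |τ^2 * R| + |τ^2 * g| := abs_sub _ _
    _ = τ^2 * |R| + τ^2 * g := by
        rw [abs_mul, abs_mul, abs_of_nonneg hτpos.le, abs_of_pos hg0]
  have habsD : |D| ≤ 2 * (τ^2 * g) := by
    have e0 : τ^2 * |R| ≤ τ^2 * (|D|/2) := mul_le_mul_of_nonneg_left hlip hτpos.le
    have e1 : τ^2 * (|D|/2) ≤ (1/4) * (|D|/2) :=
      mul_le_mul_of_nonneg_right hτ2 (by positivity)
    linarith only [h5, e0, e1, abs_nonneg D]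
  have hkey : (3/4) * (τ^2 * g) ≤ vc1 - v := by
    have hε : 0 < D + (vc1 - v) := by rw [hDdef]; linarith only [hgap]
    have e1 : τ^2 * R ≤ τ^2 * |R| := mul_le_mul_of_nonneg_left (le_abs_self R) hτpos.le
    have e2 : τ^2 * |R| ≤ τ^2 * (|D|/2) := mul_le_mul_of_nonneg_left hlip hτpos.le
    have e3 : τ^2 * (|D|/2) ≤ τ^2 * (τ^2*g) :=
      mul_le_mul_of_nonneg_left (by linarith only [habsD]) hτpos.le
    have e4 : τ^2 * (τ^2 * g) ≤ (1/4) * (τ^2*g) :=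
      mul_le_mul_of_nonneg_right hτ2 (by positivity)
    linarith only [hε, hDeq, e1, e2, e3, e4]
  -- inner-product sequences
  set Ψ := ψ v with hΨ
  have hsym := (hA v).1.isSymmetric
  obtain ⟨-, hAS, hAf0, hAfm, hAt0, hAtm⟩ := hA v
  have hinner : ∀ x : H, ⟪A v x, Ψ⟫_ℂ = ((lam v : ℝ):ℂ) * ⟪x, Ψ⟫_ℂ := by
    intro x
    have h6 := hsym x Ψ
    simp only [ContinuousLinearMap.coe_coe] at h6
    rw [h6, heig, inner_smul_right]
  have hone : ∀ p : Option (Bool × ℕ),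
      ‖(fun p : Option (Bool × ℕ) => p.elim S fun q => e q.1 q.2) p‖ = 1 := hON.1
  have hne : ∀ γ m, ‖e γ m‖ = 1 := fun γ m => hone (some (γ, m))
  set a := ⟪S, Ψ⟫_ℂ with ha
  set bs : ℕ → ℂ := fun m => ⟪e false m, Ψ⟫_ℂ with hbs
  set cs : ℕ → ℂ := fun m => ⟪e true m, Ψ⟫_ℂ with hcs
  have hbbd : ∀ m, ‖bs m‖ ≤ 1 := by
    intro m
    calc ‖bs m‖ ≤ ‖e false m‖ * ‖Ψ‖ := norm_inner_le_norm _ _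
    _ = 1 := by rw [hne, hψn, one_mul]
  have hcbd : ∀ m, ‖cs m‖ ≤ 1 := by
    intro m
    calc ‖cs m‖ ≤ ‖e true m‖ * ‖Ψ‖ := norm_inner_le_norm _ _
    _ = 1 := by rw [hne, hψn, one_mul]
  have hrecb : ∀ m, bs (m+2) + bs m = ((lam v - v : ℝ):ℂ) * bs (m+1) := by
    intro m
    have h1 := hinner (e false (m+1))
    rw [hAfm m] at h1
    simp only [inner_add_left, inner_smul_left, Complex.conj_ofReal] at h1
    simp only [hbs]
    push_cast
    linear_combination h1
  have hrecc : ∀ m, cs (m+2) + cs m = ((lam v : ℝ):ℂ) * cs (m+1) := by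
    intro m
    have h1 := hinner (e true (m+1))
    rw [hAtm m] at h1
    simp only [inner_add_left] at h1
    simp only [hcs]
    linear_combination h1
  have hbsol := recur_sol hx2 bs hbbd hrecb
  have hcsol := recur_sol hlam2 cs hcbd hrecc
  have hbpow : ∀ m, bs m = ((zeta1 (lam v - v) : ℝ):ℂ)^m * bs 0 := by
    intro m
    induction m with
    | zero => simp
    | succ n ih => rw [hbsol n, ih]; ring
  have hcpow : ∀ m, cs m = ((zeta1 (lam v) : ℝ):ℂ)^m * cs 0 := by
    intro m
    induction m with
    | zero => simp
    | succ n ih => rw [hcsol n, ih]; ring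
  -- boundary equations
  have hbdryb : (τ:ℂ) * a = ((lam v - v - zeta1 (lam v - v) : ℝ):ℂ) * bs 0 := by
    have h1 := hinner (e false 0)
    rw [hAf0] at h1
    simp only [inner_add_left, inner_smul_left, Complex.conj_ofReal] at h1
    have h2 := hbsol 0
    simp only [hbs, ha] at h1 h2 ⊢
    push_cast
    linear_combination h1 - h2
  have hbdryc : (τ:ℂ) * a = ((lam v - zeta1 (lam v) : ℝ):ℂ) * cs 0 := by
    have h1 := hinner (e true 0)
    rw [hAt0] at h1
    simp only [inner_add_left, inner_smul_left, Complex.conj_ofReal] at h1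
    have h2 := hcsol 0
    simp only [hcs, ha] at h1 h2 ⊢
    push_cast
    linear_combination h1 - h2
  -- norm versions
  obtain ⟨sp, hspdef⟩ : ∃ sp : ℝ, sp = lam v - v - zeta1 (lam v - v) := ⟨_, rfl⟩
  obtain ⟨rp, hrpdef⟩ : ∃ rp : ℝ, rp = lam v - zeta1 (lam v) := ⟨_, rfl⟩
  have hsp0 : 0 < sp := by rw [hspdef]; linarith only [hgap, hzlv1]
  have hsphi : sp ≤ 4 := by
    rw [hspdef]; linarith only [hlamhi, hvlo, hvc1lo, hzlv0]
  have hrp9 : 9 ≤ rp := by rw [hrpdef]; linarith only [hlam10, hzl1]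
  have hnb : |τ| * ‖a‖ = sp * ‖bs 0‖ := by
    have h := congrArg norm hbdryb
    rw [norm_mul, norm_mul, Complex.norm_real, Complex.norm_real,
      Real.norm_eq_abs, Real.norm_eq_abs,
      abs_of_pos (show (0:ℝ) < lam v - v - zeta1 (lam v - v) by
        linarith only [hgap, hzlv1])] at h
    rw [hspdef]; exact h
  have hnc : |τ| * ‖a‖ = rp * ‖cs 0‖ := by
    have h := congrArg norm hbdryc
    rw [norm_mul, norm_mul, Complex.norm_real, Complex.norm_real,
      Real.norm_eq_abs, Real.norm_eq_abs,
      abs_of_pos (show (0:ℝ) < lam v - zeta1 (lam v) by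
        linarith only [hlam10, hzl1])] at h
    rw [hrpdef]; exact h
  -- Bessel bound for bs 0
  have hbess : ‖bs 0‖^2 ≤ 1 - (zeta1 (lam v - v))^2 := by
    refine geom_coef_bound (q := (zeta1 (lam v - v))^2) (c := ‖bs 0‖^2)
      (by positivity) (by nlinarith only [hzlv0, hzlv1]) (fun M => ?_)
    have hB := hON.sum_inner_products_le (𝕜 := ℂ) Ψ
      (s := (Finset.range M).image (fun m => (some (false, m) : Option (Bool × ℕ))))
    rw [Finset.sum_image (by intro x _ y _ h; simpa using h)] at hB
    have hsum : ∀ m ∈ Finset.range M,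
        ‖⟪(fun p : Option (Bool × ℕ) => p.elim S fun q => e q.1 q.2) (some (false, m)), Ψ⟫_ℂ‖^2
        = ‖bs 0‖^2 * ((zeta1 (lam v - v))^2)^m := by
      intro m _
      have hcoe : ⟪(fun p : Option (Bool × ℕ) => p.elim S fun q => e q.1 q.2) (some (false, m)), Ψ⟫_ℂ
          = bs m := rfl
      rw [hcoe, hbpow m, norm_mul, norm_pow, Complex.norm_real, Real.norm_eq_abs,
        abs_of_pos hzlv0]
      ring
    rw [Finset.sum_congr rfl hsum, ← Finset.mul_sum] at hB
    rw [hψn] at hB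
    calc ‖bs 0‖^2 * ∑ m ∈ Finset.range M, ((zeta1 (lam v - v))^2)^m ≤ 1^2 := hB
    _ = 1 := one_pow 2
  -- final numeric bounds
  have h7 : 1 - (zeta1 (lam v - v))^2 ≤ 2 * g := by
    rw [hgdef]
    nlinarith only [sq_nonneg (1 - zeta1 (lam v - v))]
  have hb0sq : τ^2 * ‖bs 0‖^2 ≤ (8/3) * (vc1 - v) := by
    have e : τ^2 * ‖bs 0‖^2 ≤ τ^2 * (2*g) :=
      mul_le_mul_of_nonneg_left (le_trans hbess h7) hτpos.le
    linarith only [e, hkey]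
  have h8 : τ^2 * ‖a‖^2 = sp^2 * ‖bs 0‖^2 := by
    have h := congrArg (fun x : ℝ => x^2) hnb
    simp only [mul_pow, sq_abs] at h
    exact h
  have hasq : τ^4 * ‖a‖^2 ≤ 100 * (vc1 - v) := by
    have e1 : τ^4 * ‖a‖^2 = sp^2 * (τ^2 * ‖bs 0‖^2) := by linear_combination τ^2 * h8
    have e2 : sp^2 * (τ^2 * ‖bs 0‖^2) ≤ 16 * ((8/3) * (vc1 - v)) := by
      apply mul_le_mul (by nlinarith only [hsp0, hsphi]) hb0sq (by positivity) (by norm_num)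
    have e3 : (0:ℝ) < vc1 - v := by linarith only [hv2]
    linarith only [e1, e2, e3]
  have hc0a : ‖cs 0‖ ≤ ‖a‖ := by
    have h9 : rp * ‖cs 0‖ ≤ ‖a‖ := by
      rw [← hnc]
      calc |τ| * ‖a‖ ≤ 1 * ‖a‖ := mul_le_mul_of_nonneg_right hτ1 (norm_nonneg a)
      _ = ‖a‖ := one_mul _
    nlinarith only [h9, hrp9, norm_nonneg (cs 0)]
  have hsqrt : vc1 - v ≤ Real.sqrt (vc1 - v) := by
    have h0 : (0:ℝ) ≤ vc1 - v := by linarith only [hv2]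
    rw [Real.le_sqrt h0 h0]
    nlinarith only [mul_pos (show (0:ℝ) < vc1 - v by linarith only [hv2])
      (show (0:ℝ) < 1 - (vc1 - v) by linarith only [hvlo])]
  have hτ4 : 0 < τ^4 := by positivity
  have hτ42 : τ^4 ≤ τ^2 := by nlinarith only [hτ2, hτpos]
  -- the master coefficient bound
  have hmaster : ∀ x : ℂ, τ^4 * ‖x‖^2 ≤ 100 * (vc1 - v) →
      ‖x‖^2 ≤ 100/τ^4 * Real.sqrt (vc1 - v) := by
    intro x hx
    rw [div_mul_eq_mul_div, le_div_iff₀ hτ4]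
    have e : (100:ℝ) * (vc1 - v) ≤ 100 * Real.sqrt (vc1 - v) := by
      linarith only [hsqrt]
    linarith only [hx, e]
  constructor
  · intro b hb
    have hPb : ‖((innerSL ℂ Ψ).smulRight Ψ) b‖ = ‖⟪b, Ψ⟫_ℂ‖ := by
      simp only [ContinuousLinearMap.smulRight_apply, innerSL_apply_apply]
      rw [norm_smul, hψn, mul_one, ← norm_inner_symm]
    rw [hPb]
    rcases hb with rfl | ⟨γ, m, rfl⟩
    · exact hmaster a hasq
    · rcases γ with - | -
      · -- γ = false
        apply hmaster (bs m)
        have e1 : ‖bs m‖ ≤ ‖bs 0‖ := by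
          rw [hbpow m, norm_mul, norm_pow, Complex.norm_real, Real.norm_eq_abs,
            abs_of_pos hzlv0]
          calc zeta1 (lam v - v)^m * ‖bs 0‖
              ≤ 1 * ‖bs 0‖ :=
                mul_le_mul_of_nonneg_right (pow_le_one₀ hzlv0.le hzlv1.le) (norm_nonneg _)
          _ = ‖bs 0‖ := one_mul _
        have e2 : τ^4 * ‖bs m‖^2 ≤ τ^4 * ‖bs 0‖^2 :=
          mul_le_mul_of_nonneg_left
            (pow_le_pow_left₀ (norm_nonneg _) e1 2) hτ4.le
        have e3 : τ^4 * ‖bs 0‖^2 ≤ τ^2 * ‖bs 0‖^2 :=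
          mul_le_mul_of_nonneg_right hτ42 (by positivity)
        have e4 : (0:ℝ) < vc1 - v := by linarith only [hv2]
        linarith only [e2, e3, hb0sq, e4]
      · -- γ = true
        apply hmaster (cs m)
        have e1 : ‖cs m‖ ≤ ‖a‖ := by
          rw [hcpow m, norm_mul, norm_pow, Complex.norm_real, Real.norm_eq_abs,
            abs_of_pos hzl0]
          calc zeta1 (lam v)^m * ‖cs 0‖
              ≤ 1 * ‖cs 0‖ :=
                mul_le_mul_of_nonneg_right (pow_le_one₀ hzl0.le hzl1.le) (norm_nonneg _)
          _ = ‖cs 0‖ := one_mul _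
          _ ≤ ‖a‖ := hc0a
        have e2 : τ^4 * ‖cs m‖^2 ≤ τ^4 * ‖a‖^2 :=
          mul_le_mul_of_nonneg_left (pow_le_pow_left₀ (norm_nonneg _) e1 2) hτ4.le
        linarith only [e2, hasq]
  · rw [ContinuousLinearMap.norm_smulRight_apply, innerSL_apply_norm, hψn]
    norm_num
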